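/- arXiv:1706.08147 — 7 statements merged into one kernel-verified Lean document; each statement's English description precedes it below -/
import Mathlib

section
/- For each x in a Banach space E, the evaluation function δ_x : E* → ℝ given by δ_x(x*) = x*(x) satisfies ||δ_x||_{FBL[E]} = ||x||_E; consequently the map x ↦ δ_x is a linear isometry from E into H_0[E]. -/
open scoped ENNReal

noncomputable section

/-- `f : E* → ℝ` is positively homogeneous. -/
def PosHom {E : Type*} [NormedAddCommGroup E] [NormedSpace ℝ E]
    (f : StrongDual ℝ E → ℝ) : Prop :=
  ∀ (c : ℝ), 0 ≤ c → ∀ x, f (c • x) = c * f x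

/-- A finite list of functionals `x_1*, …, x_n*` with `sup_{x ∈ B_E} Σ |x_k*(x)| ≤ 1`. -/
def Admissible {E : Type*} [NormedAddCommGroup E] [NormedSpace ℝ E]
    (l : List (StrongDual ℝ E)) : Prop :=
  ∀ x : E, ‖x‖ ≤ 1 → (l.map (fun φ => |φ x|)).sum ≤ 1

/-- The free Banach lattice norm `‖f‖_{FBL[E]}` (possibly infinite). -/
def fblNorm {E : Type*} [NormedAddCommGroup E] [NormedSpace ℝ E]
    (f : StrongDual ℝ E → ℝ) : ℝ≥0∞ :=
  ⨆ l : {l : List (StrongDual ℝ E) // Admissible l},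
    ENNReal.ofReal ((l.1.map (fun φ => |f φ|)).sum)
/-- `‖δ_x‖_{FBL[E]} = ‖x‖` and `x ↦ δ_x` is a linear isometry into `H_0[E]`. -/
theorem stmt2 {E : Type*} [NormedAddCommGroup E] [NormedSpace ℝ E] [CompleteSpace E] :
    (∀ x : E, fblNorm (fun φ : StrongDual ℝ E => φ x) = ENNReal.ofReal ‖x‖) ∧
    (∀ x y : E, (fun φ : StrongDual ℝ E => φ (x + y)) =
      (fun φ : StrongDual ℝ E => φ x) + (fun φ : StrongDual ℝ E => φ y)) ∧
    (∀ (c : ℝ) (x : E), (fun φ : StrongDual ℝ E => φ (c • x)) =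
      c • (fun φ : StrongDual ℝ E => φ x)) := by

  refine ⟨fun x => ?_, fun x y => funext fun φ => by simp, fun c x => funext fun φ => by simp⟩
  apply le_antisymm
  · apply iSup_le
    rintro ⟨l, hl⟩
    apply ENNReal.ofReal_le_ofReal
    by_cases hx : x = 0
    · simp [hx]
    · have hnorm : (0:ℝ) < ‖x‖ := norm_pos_iff.mpr hx
      have h1 : ‖(‖x‖⁻¹ • x)‖ ≤ 1 := by
        rw [norm_smul, norm_inv, norm_norm]
        rw [inv_mul_cancel₀ hnorm.ne']
      have := hl (‖x‖⁻¹ • x) h1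
      have heq : (l.map (fun φ => |φ (‖x‖⁻¹ • x)|)).sum
          = ‖x‖⁻¹ * (l.map (fun φ => |φ x|)).sum := by
        rw [← List.sum_map_mul_left]
        congr 1
        ext φ
        simp [abs_mul, abs_of_nonneg (inv_nonneg.mpr hnorm.le)]
      rw [heq] at this
      calc (l.map (fun φ => |φ x|)).sum = ‖x‖ * (‖x‖⁻¹ * (l.map (fun φ => |φ x|)).sum) := by
            field_simp
        _ ≤ ‖x‖ * 1 := by
            apply mul_le_mul_of_nonneg_left this hnorm.le
        _ = ‖x‖ := mul_one _
  · by_cases hx : x = 0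
    · simp [hx]
    · obtain ⟨g, hg1, hgx⟩ := exists_dual_vector ℝ x (norm_ne_zero_iff.mpr hx)
      have hadm : Admissible [g] := by
        intro y hy
        simpa using (g.le_opNorm y).trans (by rw [hg1]; simpa using hy)
      have := le_iSup (fun l : {l : List (StrongDual ℝ E) // Admissible l} =>
        ENNReal.ofReal ((l.1.map (fun φ => |(fun φ : StrongDual ℝ E => φ x) φ|)).sum))
        ⟨[g], hadm⟩
      refine le_trans ?_ this
      simp [hgx, abs_of_nonneg (norm_nonneg x)]
end
end

section
/- The function f : ℓ∞ → ℝ defined by f(x) = sup_{n ≥ 1} |x(n)|/n satisfies ||f||_{FBL[ℓ1]} = ∞, where ||f||_{FBL[ℓ1]} := sup { Σ_{k=1}^n |f(x_k)| : x_1,…,x_n ∈ ℓ∞, sup_{a ∈ ℕ} Σ_{k=1}^n |x_k(a)| ≤ 1 }. -/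
open scoped ENNReal

noncomputable section

/-- Positive homogeneity for functions on `ℓ∞(A)` (the dual of `ℓ1(A)`). -/
def PosHomA {A : Type*} (f : lp (fun _ : A => ℝ) ⊤ → ℝ) : Prop :=
  ∀ (c : ℝ), 0 ≤ c → ∀ x, f (c • x) = c * f x

/-- `x_1*, …, x_n* ∈ ℓ∞(A)` with `sup_{a ∈ A} Σ |x_k*(a)| ≤ 1`. -/
def AdmissibleA {A : Type*} (l : List (lp (fun _ : A => ℝ) ⊤)) : Prop :=
  ∀ a : A, (l.map (fun x => |x a|)).sum ≤ 1

/-- The norm `‖f‖_{FBL[ℓ1(A)]}` (possibly infinite). -/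
def fblNormA {A : Type*} (f : lp (fun _ : A => ℝ) ⊤ → ℝ) : ℝ≥0∞ :=
  ⨆ l : {l : List (lp (fun _ : A => ℝ) ⊤) // AdmissibleA l},
    ENNReal.ofReal ((l.1.map (fun x => |f x|)).sum)

/-- the `k`-th unit vector in `ℓ∞`. -/
def eVec (k : ℕ) : lp (fun _ : ℕ => ℝ) ⊤ :=
  ⟨fun a => if a = k then 1 else 0, by
    apply memℓp_infty
    refine ⟨1, ?_⟩
    rintro r ⟨a, rfl⟩
    by_cases h : a = k <;> simp [h]⟩

lemma eVec_apply (k a : ℕ) : eVec k a = if a = k then 1 else 0 := rfl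

lemma f_eVec (k : ℕ) :
    (⨆ n : ℕ, |eVec k n| / (n + 1)) = 1 / (k + 1) := by
  have hb : ∀ n : ℕ, |eVec k n| / (n + 1) ≤ 1 / (k + 1) := by
    intro n
    rw [eVec_apply]
    by_cases h : n = k
    · subst h; simp
    · simp only [h, if_false, abs_zero, zero_div]
      positivity
  refine le_antisymm (ciSup_le hb) ?_
  have := le_ciSup ⟨1 / (k + 1 : ℝ), by rintro r ⟨n, rfl⟩; exact hb n⟩ k
  simpa [eVec_apply] using this

lemma f_eVec_abs (k : ℕ) :
    |⨆ n : ℕ, |eVec k n| / (n + 1)| = 1 / (k + 1) := by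
  rw [f_eVec, abs_of_nonneg (by positivity)]

/-- the function `f(x) = sup_n |x(n)|/n` on `ℓ∞` has `‖f‖_{FBL[ℓ1]} = ∞`. -/
theorem stmt5 :
    fblNormA (fun x : lp (fun _ : ℕ => ℝ) ⊤ => ⨆ n : ℕ, |x n| / (n + 1)) = ∞ := by
  rw [fblNormA, iSup_eq_top]
  intro b hb
  obtain ⟨n, hn⟩ := (Filter.tendsto_atTop.1 Real.tendsto_sum_range_one_div_nat_succ_atTop
    (b.toReal + 1)).exists
  have hadm : AdmissibleA ((List.range n).map eVec) := by
    intro a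
    rw [List.map_map]
    have h1 : ((List.range n).map ((fun x : lp (fun _ : ℕ => ℝ) ⊤ => |x a|) ∘ eVec)).sum
        = ∑ k ∈ Finset.range n, |eVec k a| := rfl
    rw [h1]
    calc ∑ k ∈ Finset.range n, |eVec k a|
        = ∑ k ∈ Finset.range n, (if a = k then (1:ℝ) else 0) := by
          apply Finset.sum_congr rfl; intro k _
          rw [eVec_apply]; by_cases h : a = k <;> simp [h]
      _ ≤ 1 := by rw [Finset.sum_ite_eq]; split <;> norm_num
  refine ⟨⟨(List.range n).map eVec, hadm⟩, ?_⟩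
  have hsum : ((((List.range n).map eVec).map
      (fun x : lp (fun _ : ℕ => ℝ) ⊤ => |⨆ m : ℕ, |x m| / (m + 1)|)).sum : ℝ)
      = ∑ k ∈ Finset.range n, (1 / (k + 1) : ℝ) := by
    rw [List.map_map]
    have h1 : ((List.range n).map ((fun x : lp (fun _ : ℕ => ℝ) ⊤ =>
        |⨆ m : ℕ, |x m| / (m + 1)|) ∘ eVec)).sum
        = ∑ k ∈ Finset.range n, |⨆ m : ℕ, |eVec k m| / (m + 1)| := rfl
    rw [h1]
    exact Finset.sum_congr rfl fun k _ => f_eVec_abs k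
  calc b = ENNReal.ofReal b.toReal := (ENNReal.ofReal_toReal hb.ne).symm
    _ < ENNReal.ofReal (b.toReal + 1) := by
        rw [ENNReal.ofReal_lt_ofReal_iff (by positivity)]; linarith
    _ ≤ _ := by
        rw [hsum]
        exact ENNReal.ofReal_le_ofReal hn
end
end

section
/- Let E be an infinite-dimensional Banach space with density character κ. Then there exist δ > 0 and a linearly independent set S contained in the unit sphere of E with |S| = κ such that ||x − λx'|| ≥ δ for all distinct x, x' ∈ S and all real λ. -/
noncomputable section

/-- The density character of a topological space: the least cardinality of a dense subset. -/
def densChar (α : Type*) [TopologicalSpace α] : Cardinal :=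
  ⨅ s : {s : Set α // Dense s}, Cardinal.mk s

section aux

variable {E : Type*} [NormedAddCommGroup E] [NormedSpace ℝ E]

theorem densChar_le_of_dense (s : Set E) (hs : Dense s) : densChar E ≤ Cardinal.mk s :=
  ciInf_le' _ (⟨s, hs⟩ : {s : Set E // Dense s})

theorem aleph0_le_densChar (hinf : ¬ FiniteDimensional ℝ E) [CompleteSpace E] :
    Cardinal.aleph0 ≤ densChar E := by
  have hnt : Nontrivial E := by
    by_contra h
    rw [not_nontrivial_iff_subsingleton] at h
    exact hinf (Module.Finite.of_basis (Module.Basis.empty (ι := Empty) _))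
  obtain ⟨x, hx⟩ := exists_ne (0 : E)
  have hEinf : Infinite E :=
    Infinite.of_injective (fun r : ℝ => r • x) fun a b hab => by
      have := sub_eq_zero.2 hab
      rw [← sub_smul, smul_eq_zero] at this
      rcases this with h | h
      · exact sub_eq_zero.1 h
      · exact absurd h hx
  haveI : Nonempty {s : Set E // Dense s} := ⟨⟨Set.univ, dense_univ⟩⟩
  refine le_ciInf fun ⟨s, hs⟩ => ?_
  by_contra h
  push_neg at h
  have hfin : s.Finite := Cardinal.lt_aleph0_iff_set_finite.mp h
  have : s = Set.univ := by
    have := hs.closure_eq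
    rwa [hfin.isClosed.closure_eq] at this
  have : Finite E := by
    rw [← Set.finite_univ_iff, ← this]; exact hfin
  exact (not_finite E)

/-- If the real span of `s` is dense, the density character is at most `max #s ℵ₀`. -/
theorem densChar_le_of_dense_span {s : Set E}
    (hd : Dense ((Submodule.span ℝ s : Submodule ℝ E) : Set E)) :
    densChar E ≤ max (Cardinal.mk s) Cardinal.aleph0 := by
  letI : Module ℚ E := Module.compHom E (Rat.castHom ℝ)
  have hqs : ∀ (q : ℚ) (x : E), q • x = (q : ℝ) • x := fun _ _ => rfl
  set T : Set E := ((Submodule.span ℚ s : Submodule ℚ E) : Set E) with hT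
  -- closure of T is closed under addition and under real scalar multiplication
  have hadd : ∀ x ∈ closure T, ∀ y ∈ closure T, x + y ∈ closure T := by
    intro x hx y hy
    exact ((Submodule.span ℚ s).toAddSubmonoid.topologicalClosure : AddSubmonoid E).add_mem hx hy
  have hsmul : ∀ (r : ℝ), ∀ x ∈ closure T, r • x ∈ closure T := by
    intro r x hx
    have h1 : (r, x) ∈ closure ((Set.range ((↑) : ℚ → ℝ)) ×ˢ T) := by
      rw [closure_prod_eq]
      exact ⟨Rat.denseRange_cast r, hx⟩
    have h2 : r • x ∈ closure ((fun p : ℝ × E => p.1 • p.2) '' ((Set.range ((↑) : ℚ → ℝ)) ×ˢ T)) := by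
      have := image_closure_subset_closure_image
        (f := fun p : ℝ × E => p.1 • p.2) (s := (Set.range ((↑) : ℚ → ℝ)) ×ˢ T) continuous_smul
      exact this ⟨(r, x), h1, rfl⟩
    refine closure_mono ?_ h2
    rintro _ ⟨⟨c, y⟩, ⟨⟨q, rfl⟩, hy⟩, rfl⟩
    show (q : ℝ) • y ∈ T
    rw [← hqs]
    exact (Submodule.span ℚ s).smul_mem q hy
  have hdense : Dense T := by
    rw [dense_iff_closure_eq, ← Set.univ_subset_iff]
    rw [dense_iff_closure_eq] at hd
    calc Set.univ = closure ((Submodule.span ℝ s : Submodule ℝ E) : Set E) := hd.symm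
      _ ⊆ closure (closure T) := by
          apply closure_mono
          intro x hx
          refine Submodule.span_induction (fun x hx => subset_closure (Submodule.subset_span hx))
            (by simpa using subset_closure (Submodule.zero_mem (Submodule.span ℚ s)))
            (fun x y _ _ hx hy => hadd x hx y hy)
            (fun r x _ hx => hsmul r x hx) hx
      _ = closure T := closure_closure
  refine (densChar_le_of_dense T hdense).trans ?_
  -- cardinality of the ℚ-span
  have hsurj : Function.Surjective
      (fun p : (s →₀ ℚ) => (⟨Finsupp.linearCombination ℚ ((↑) : s → E) p, by
        have : Finsupp.linearCombination ℚ ((↑) : s → E) p ∈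
            Submodule.span ℚ (Set.range ((↑) : s → E)) := by
          rw [← Finsupp.range_linearCombination]; exact ⟨p, rfl⟩
        rwa [Subtype.range_coe] at this⟩ : T)) := by
    rintro ⟨x, hx⟩
    rw [hT, SetLike.mem_coe, ← Subtype.range_coe (s := s), ← Finsupp.range_linearCombination ℚ]
      at hx
    obtain ⟨p, hp⟩ := hx
    exact ⟨p, Subtype.ext hp⟩
  refine (Cardinal.mk_le_of_surjective hsurj).trans ?_
  rcases isEmpty_or_nonempty s with he | hne
  · refine le_max_of_le_right ?_
    have : Subsingleton (↥s →₀ ℚ) := inferInstance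
    exact (Cardinal.le_one_iff_subsingleton.mpr this).trans Cardinal.one_le_aleph0
  · rw [Cardinal.mk_finsupp_lift_of_infinite' s ℚ]
    have : Cardinal.mk ℚ = Cardinal.aleph0 := Cardinal.mk_eq_aleph0 ℚ
    simp [this]

end aux

section riesz

variable {E : Type*} [NormedAddCommGroup E] [NormedSpace ℝ E] [CompleteSpace E]

theorem exists_riesz_point (hinf : ¬ FiniteDimensional ℝ E)
    {s : Set E} (hs : Cardinal.mk s < densChar E) :
    ∃ x : E, ‖x‖ = 1 ∧ ∀ y ∈ Submodule.span ℝ s, (2:ℝ)⁻¹ ≤ ‖x - y‖ := by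
  set F := (Submodule.span ℝ s).topologicalClosure with hF
  have hFc : IsClosed (F : Set E) := Submodule.isClosed_topologicalClosure _
  have hFex : ∃ x : E, x ∉ F := by
    by_contra h
    push_neg at h
    have hd : Dense ((Submodule.span ℝ s : Submodule ℝ E) : Set E) := by
      rw [dense_iff_closure_eq, ← Submodule.topologicalClosure_coe, ← hF]
      exact Set.eq_univ_of_forall h
    rcases lt_or_ge (Cardinal.mk s) Cardinal.aleph0 with hlt | hge
    · have hsf : s.Finite := Cardinal.lt_aleph0_iff_set_finite.mp hlt
      have hfd : FiniteDimensional ℝ (Submodule.span ℝ s) :=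
        FiniteDimensional.span_of_finite ℝ hsf
      have hcl : IsClosed ((Submodule.span ℝ s : Submodule ℝ E) : Set E) :=
        Submodule.closed_of_finiteDimensional _
      have htop : Submodule.span ℝ s = ⊤ := by
        apply SetLike.coe_injective
        rw [Submodule.top_coe, ← hcl.closure_eq, hd.closure_eq]
      exact hinf ⟨Submodule.fg_def.mpr ⟨s, hsf, htop⟩⟩
    · have h1 := densChar_le_of_dense_span hd
      rw [max_eq_left hge] at h1
      exact absurd (h1.trans_lt hs) (lt_irrefl _)
  obtain ⟨x₀, hx₀F, hx₀⟩ := riesz_lemma hFc hFex (r := 2⁻¹) (by norm_num)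
  have hx0 : x₀ ≠ 0 := fun h => hx₀F (h ▸ F.zero_mem)
  have hn : ‖x₀‖ ≠ 0 := norm_ne_zero_iff.mpr hx0
  have hnpos : (0:ℝ) < ‖x₀‖ := norm_pos_iff.mpr hx0
  refine ⟨‖x₀‖⁻¹ • x₀, by rw [norm_smul, norm_inv, norm_norm, inv_mul_cancel₀ hn], ?_⟩
  intro y hy
  have hyF : ‖x₀‖ • y ∈ F := F.smul_mem _ (Submodule.le_topologicalClosure _ hy)
  have h2 := hx₀ _ hyF
  have h3 : ‖x₀‖⁻¹ • x₀ - y = ‖x₀‖⁻¹ • (x₀ - ‖x₀‖ • y) := by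
    rw [smul_sub, smul_smul, inv_mul_cancel₀ hn, one_smul]
  rw [h3, norm_smul, norm_inv, norm_norm]
  calc (2:ℝ)⁻¹ = ‖x₀‖⁻¹ * (2⁻¹ * ‖x₀‖) := by field_simp
    _ ≤ ‖x₀‖⁻¹ * ‖x₀ - ‖x₀‖ • y‖ := by
        apply mul_le_mul_of_nonneg_left h2 (by positivity)

/-- The transfinite sequence of unit vectors far from the span of the previous ones. -/
noncomputable def sseq (hinf : ¬ FiniteDimensional ℝ E) : (densChar E).ord.ToType → E :=
  WellFoundedLT.fix fun i ih =>
    (exists_riesz_point hinf (s := Set.range fun j : {j // j < i} => ih j j.2)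
      (lt_of_le_of_lt Cardinal.mk_range_le (Cardinal.mk_Iio_ord_toType i))).choose

theorem sseq_def (hinf : ¬ FiniteDimensional ℝ E) (i : (densChar E).ord.ToType) :
    sseq hinf i =
      (exists_riesz_point hinf (s := Set.range fun j : {j // j < i} => sseq hinf j)
        (lt_of_le_of_lt Cardinal.mk_range_le (Cardinal.mk_Iio_ord_toType i))).choose := by
  rw [sseq]
  exact WellFoundedLT.fix_eq _ _

theorem sseq_norm (hinf : ¬ FiniteDimensional ℝ E) (i : (densChar E).ord.ToType) :
    ‖sseq hinf i‖ = 1 := by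
  rw [sseq_def]
  exact (exists_riesz_point hinf (s := Set.range fun j : {j // j < i} => sseq hinf j)
    (lt_of_le_of_lt Cardinal.mk_range_le (Cardinal.mk_Iio_ord_toType i))).choose_spec.1

theorem sseq_dist (hinf : ¬ FiniteDimensional ℝ E) (i : (densChar E).ord.ToType) :
    ∀ y ∈ Submodule.span ℝ (Set.range fun j : {j // j < i} => sseq hinf j),
      (2:ℝ)⁻¹ ≤ ‖sseq hinf i - y‖ := by
  intro y hy
  rw [sseq_def]
  exact (exists_riesz_point hinf (s := Set.range fun j : {j // j < i} => sseq hinf j)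
    (lt_of_le_of_lt Cardinal.mk_range_le (Cardinal.mk_Iio_ord_toType i))).choose_spec.2 y hy

end riesz

/-- in an infinite-dimensional Banach space `E` of density character `κ`, there are
`δ > 0` and a linearly independent set `S ⊆ S_E` of cardinality `κ` with `‖x - λ x'‖ ≥ δ`
for all distinct `x, x' ∈ S` and all scalars `λ`. -/
theorem stmt6 {E : Type*} [NormedAddCommGroup E] [NormedSpace ℝ E] [CompleteSpace E]
    (hinf : ¬ FiniteDimensional ℝ E) :
    ∃ δ : ℝ, 0 < δ ∧ ∃ S : Set E, S ⊆ Metric.sphere (0 : E) 1 ∧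
      LinearIndependent ℝ ((↑) : S → E) ∧ Cardinal.mk S = densChar E ∧
      ∀ x ∈ S, ∀ x' ∈ S, x ≠ x' → ∀ l : ℝ, δ ≤ ‖x - l • x'‖ := by
  classical
  set v : (densChar E).ord.ToType → E := sseq hinf with hv
  have hsep : ∀ i j : (densChar E).ord.ToType, j < i → ∀ l : ℝ,
      (2:ℝ)⁻¹ ≤ ‖v i - l • v j‖ := by
    intro i j hji l
    apply sseq_dist hinf i
    exact Submodule.smul_mem _ _ (Submodule.subset_span ⟨⟨j, hji⟩, rfl⟩)
  have hinj : Function.Injective v := by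
    intro i j hij
    by_contra hne
    rcases lt_or_gt_of_ne hne with h | h
    · have := hsep j i h 1
      rw [one_smul, hij, sub_self, norm_zero] at this; norm_num at this
    · have := hsep i j h 1
      rw [one_smul, hij, sub_self, norm_zero] at this; norm_num at this
  have hli : LinearIndependent ℝ v := by
    rw [linearIndependent_iff']
    intro t g hsum i hit
    by_contra hgi
    set t' := t.filter (fun j => g j ≠ 0) with ht'
    have hne : t'.Nonempty := ⟨i, Finset.mem_filter.mpr ⟨hit, hgi⟩⟩
    set m := t'.max' hne with hm
    have hmt' : m ∈ t' := t'.max'_mem hne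
    have hmt : m ∈ t := Finset.mem_of_mem_filter m hmt'
    have hgm : g m ≠ 0 := (Finset.mem_filter.mp hmt').2
    have hmem : v m ∈ Submodule.span ℝ (Set.range fun j : {j // j < m} => v j) := by
      have hsum' : g m • v m = - ∑ j ∈ t.erase m, g j • v j := by
        rw [eq_neg_iff_add_eq_zero, ← Finset.add_sum_erase t (fun j => g j • v j) hmt] at *
        exact hsum
      have hvm : v m = (g m)⁻¹ • (g m • v m) := by
        rw [smul_smul, inv_mul_cancel₀ hgm, one_smul]
      rw [hvm, hsum']
      refine Submodule.smul_mem _ _ (Submodule.neg_mem _ (Submodule.sum_mem _ ?_))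
      intro j hj
      rcases eq_or_ne (g j) 0 with h0 | h0
      · rw [h0, zero_smul]; exact Submodule.zero_mem _
      · have hjt' : j ∈ t' := Finset.mem_filter.mpr ⟨Finset.mem_of_mem_erase hj, h0⟩
        have hjm : j < m := lt_of_le_of_ne (t'.le_max' j hjt') (Finset.ne_of_mem_erase hj)
        exact Submodule.smul_mem _ _ (Submodule.subset_span ⟨⟨j, hjm⟩, rfl⟩)
    have hcontra := sseq_dist hinf m (v m) hmem
    rw [sub_self, norm_zero] at hcontra; norm_num at hcontra
  refine ⟨3⁻¹, by norm_num, Set.range v, ?_, ?_, ?_, ?_⟩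
  · rintro _ ⟨i, rfl⟩
    exact mem_sphere_zero_iff_norm.mpr (sseq_norm hinf i)
  · exact hli.linearIndepOn_id
  · rw [Cardinal.mk_range_eq v hinj, Cardinal.mk_ord_toType]
  · rintro _ ⟨i, rfl⟩ _ ⟨j, rfl⟩ hne l
    have hij : i ≠ j := fun h => hne (congrArg v h)
    rcases lt_or_gt_of_ne hij with h | h
    · rcases le_or_gt |l| (2/3 : ℝ) with hl | hl
      · have h1 : ‖v i‖ - ‖l • v j‖ ≤ ‖v i - l • v j‖ := norm_sub_norm_le _ _
        have h2 : ‖v i‖ = 1 := sseq_norm hinf i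
        have h3 : ‖l • v j‖ = |l| := by
          rw [norm_smul, Real.norm_eq_abs, sseq_norm hinf j, mul_one]
        rw [h2, h3] at h1
        linarith
      · have hlne : l ≠ 0 := by
          intro h0; rw [h0, abs_zero] at hl; linarith
        have key : (-l) • (v j - l⁻¹ • v i) = v i - l • v j := by
          match_scalars <;> field_simp
        have hdist := hsep j i h l⁻¹
        calc (3:ℝ)⁻¹ ≤ |l| * 2⁻¹ := by linarith
          _ ≤ |l| * ‖v j - l⁻¹ • v i‖ := mul_le_mul_of_nonneg_left hdist (abs_nonneg l)
          _ = ‖(-l) • (v j - l⁻¹ • v i)‖ := by rw [norm_smul, Real.norm_eq_abs, abs_neg]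
          _ = ‖v i - l • v j‖ := by rw [key]
    · exact le_trans (by norm_num) (hsep i j h l)
end
end

section
/- Let A be a nonempty set and f ∈ H_0[ℓ1(A)]_+ a maximal element, i.e., the only g ∈ H_0[ℓ1(A)]_+ with g ≥ f pointwise and ||g||_{FBL[ℓ1(A)]} = ||f||_{FBL[ℓ1(A)]} is f itself. Then f is monotone with respect to absolute value: f(x*) ≤ f(y*) whenever x*, y* ∈ ℓ∞(A) satisfy |x*| ≤ |y*| pointwise. -/
open scoped ENNReal

noncomputable section

/-- `f` is a maximal element of `H_0[ℓ1(A)]_+`: it cannot be pointwise increased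
without changing its FBL-norm. -/
def MaximalA {A : Type*} (f : lp (fun _ : A => ℝ) ⊤ → ℝ) : Prop :=
  PosHomA f ∧ (∀ x, 0 ≤ f x) ∧ fblNormA f < ∞ ∧
    ∀ g : lp (fun _ : A => ℝ) ⊤ → ℝ, PosHomA g → (∀ x, 0 ≤ g x) → fblNormA g < ∞ →
      (∀ x, f x ≤ g x) → fblNormA g = fblNormA f → g = f

lemma sum_map_add_const {α : Type*} (l : List α) (F : α → ℝ) (δ : ℝ) :
    (l.map fun y => F y + δ).sum = (l.map F).sum + l.length * δ := by
  induction l with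
  | nil => simp
  | cons hd tl ih =>
    simp only [List.map_cons, List.sum_cons, List.length_cons, ih]
    push_cast
    ring

/-- a maximal `f ∈ H_0[ℓ1(A)]_+` is monotone w.r.t. absolute value. -/
theorem stmt9 {A : Type*} [Nonempty A] (f : lp (fun _ : A => ℝ) ⊤ → ℝ)
    (hf : MaximalA f) :
    ∀ x y : lp (fun _ : A => ℝ) ⊤, (∀ a, |x a| ≤ |y a|) → f x ≤ f y := by
  classical
  obtain ⟨hph, hpos, hfin, hmax⟩ := hf
  set M : ℝ := (fblNormA f).toReal with hMdef
  have hfinne : fblNormA f ≠ ⊤ := hfin.ne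
  have hM0 : 0 ≤ M := ENNReal.toReal_nonneg
  have hf0 : f 0 = 0 := by
    have h := hph 0 le_rfl 0
    rw [zero_smul, zero_mul] at h
    exact h
  -- sums over admissible lists are bounded by M
  have hsum : ∀ l : List (lp (fun _ : A => ℝ) ⊤), AdmissibleA l →
      ((l.map fun x => |f x|)).sum ≤ M := by
    intro l hl
    have hle : ENNReal.ofReal ((l.map fun x => |f x|).sum) ≤ fblNormA f :=
      le_iSup (fun l : {l : List (lp (fun _ : A => ℝ) ⊤) // AdmissibleA l} =>
        ENNReal.ofReal ((l.1.map fun x => |f x|).sum)) ⟨l, hl⟩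
    exact (ENNReal.ofReal_le_iff_le_toReal hfinne).mp hle
  -- pointwise bound
  have hbd : ∀ z : lp (fun _ : A => ℝ) ⊤, (∀ a, |z a| ≤ 1) → f z ≤ M := by
    intro z hz
    have hadm : AdmissibleA [z] := by
      intro a
      simp only [List.map_cons, List.map_nil, List.sum_cons, List.sum_nil, add_zero]
      exact hz a
    have := hsum [z] hadm
    simp only [List.map_cons, List.map_nil, List.sum_cons, List.sum_nil, add_zero] at this
    exact (le_abs_self _).trans this
  set S : lp (fun _ : A => ℝ) ⊤ → Set ℝ :=
    fun y => {r | ∃ x, (∀ a, |x a| ≤ |y a|) ∧ f x = r} with hSdef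
  have hmemS : ∀ y, f y ∈ S y := fun y => ⟨y, fun a => le_rfl, rfl⟩
  have hSne : ∀ y, (S y).Nonempty := fun y => ⟨f y, hmemS y⟩
  have habs : ∀ (y : lp (fun _ : A => ℝ) ⊤) (a : A), |y a| ≤ ‖y‖ := by
    intro y a
    have h := lp.norm_apply_le_norm (ENNReal.top_ne_zero) y a
    rw [Real.norm_eq_abs] at h
    exact h
  have hsmul : ∀ (c : ℝ) (x : lp (fun _ : A => ℝ) ⊤) (a : A), (c • x) a = c * x a := by
    intro c x a
    rw [lp.coeFn_smul]
    rfl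
  have hSbdd : ∀ y, BddAbove (S y) := by
    intro y
    refine ⟨(‖y‖ + 1) * M, ?_⟩
    rintro r ⟨x, hx, rfl⟩
    have hc : (0:ℝ) < ‖y‖ + 1 := by have := norm_nonneg y; linarith
    have hx1 : ∀ a, |((‖y‖+1)⁻¹ • x) a| ≤ 1 := by
      intro a
      have h1 : |x a| ≤ ‖y‖ + 1 := (hx a).trans ((habs y a).trans (by linarith))
      calc |((‖y‖+1)⁻¹ • x) a| = (‖y‖+1)⁻¹ * |x a| := by
            rw [hsmul, abs_mul, abs_of_pos (inv_pos.mpr hc)]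
        _ ≤ (‖y‖+1)⁻¹ * (‖y‖+1) := mul_le_mul_of_nonneg_left h1 (inv_pos.mpr hc).le
        _ = 1 := inv_mul_cancel₀ hc.ne'
    have hxx : (‖y‖+1) • ((‖y‖+1)⁻¹ • x) = x := by
      rw [smul_smul, mul_inv_cancel₀ hc.ne', one_smul]
    calc f x = (‖y‖+1) * f ((‖y‖+1)⁻¹ • x) := by
          rw [← hph _ hc.le ((‖y‖+1)⁻¹ • x), hxx]
      _ ≤ (‖y‖+1) * M := by
          exact mul_le_mul_of_nonneg_left (hbd _ hx1) hc.le
  set g : lp (fun _ : A => ℝ) ⊤ → ℝ := fun y => sSup (S y) with hgdef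
  have hmono : ∀ x y : lp (fun _ : A => ℝ) ⊤, (∀ a, |x a| ≤ |y a|) → f x ≤ g y :=
    fun x y hxy => le_csSup (hSbdd y) ⟨x, hxy, rfl⟩
  have hgf : ∀ y, f y ≤ g y := fun y => le_csSup (hSbdd y) (hmemS y)
  have hg0 : ∀ y, 0 ≤ g y := fun y => (hpos y).trans (hgf y)
  -- positive homogeneity of g
  have hgph : PosHomA g := by
    intro c hc y
    rcases hc.eq_or_lt with h0 | hcpos
    · rw [← h0, zero_smul, zero_mul]
      refine le_antisymm (csSup_le (hSne 0) ?_) (hg0 0)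
      rintro r ⟨x, hx, rfl⟩
      have hx0 : x = 0 := by
        ext a
        have := hx a
        simp only [lp.coeFn_zero, Pi.zero_apply, abs_zero] at this ⊢
        exact abs_eq_zero.mp (le_antisymm this (abs_nonneg _))
      rw [hx0, hf0]
    · have h1 : g (c • y) ≤ c * g y := by
        refine csSup_le (hSne _) ?_
        rintro r ⟨x, hx, rfl⟩
        have hx' : ∀ a, |(c⁻¹ • x) a| ≤ |y a| := by
          intro a
          have := hx a
          rw [hsmul c y a, abs_mul, abs_of_pos hcpos] at this
          rw [hsmul, abs_mul, abs_of_pos (inv_pos.mpr hcpos)]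
          calc c⁻¹ * |x a| ≤ c⁻¹ * (c * |y a|) :=
              mul_le_mul_of_nonneg_left this (inv_pos.mpr hcpos).le
            _ = |y a| := by rw [← mul_assoc, inv_mul_cancel₀ hcpos.ne', one_mul]
        have hxx : c • (c⁻¹ • x) = x := by
          rw [smul_smul, mul_inv_cancel₀ hcpos.ne', one_smul]
        calc f x = c * f (c⁻¹ • x) := by rw [← hph c hc (c⁻¹ • x), hxx]
          _ ≤ c * g y := mul_le_mul_of_nonneg_left (hmono _ _ hx') hc
      have h2 : g y ≤ c⁻¹ * g (c • y) := by
        refine csSup_le (hSne _) ?_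
        rintro r ⟨x, hx, rfl⟩
        have hx' : ∀ a, |(c • x) a| ≤ |(c • y) a| := by
          intro a
          rw [hsmul, hsmul, abs_mul, abs_mul]
          exact mul_le_mul_of_nonneg_left (hx a) (abs_nonneg c)
        have : f (c • x) ≤ g (c • y) := hmono _ _ hx'
        rw [hph c hc x] at this
        calc f x = c⁻¹ * (c * f x) := by
              rw [← mul_assoc, inv_mul_cancel₀ hcpos.ne', one_mul]
          _ ≤ c⁻¹ * g (c • y) :=
            mul_le_mul_of_nonneg_left this (inv_pos.mpr hcpos).le
      refine le_antisymm h1 ?_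
      calc c * g y ≤ c * (c⁻¹ * g (c • y)) := mul_le_mul_of_nonneg_left h2 hc
        _ = g (c • y) := by rw [← mul_assoc, mul_inv_cancel₀ hcpos.ne', one_mul]
  -- norm of g bounded by norm of f
  have hglesum : ∀ l : List (lp (fun _ : A => ℝ) ⊤), AdmissibleA l →
      ((l.map fun x => |g x|)).sum ≤ M := by
    intro l hl
    refine le_of_forall_pos_le_add ?_
    intro ε hε
    set δ : ℝ := ε / (l.length + 1) with hδ
    have hδpos : 0 < δ := by positivity
    have hpick : ∀ y : lp (fun _ : A => ℝ) ⊤,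
        ∃ x, (∀ a, |x a| ≤ |y a|) ∧ g y - δ < f x := by
      intro y
      obtain ⟨r, hr, hlt⟩ := exists_lt_of_lt_csSup (hSne y)
        (show g y - δ < g y by linarith)
      obtain ⟨x, hx, rfl⟩ := hr
      exact ⟨x, hx, hlt⟩
    choose pick hpick1 hpick2 using hpick
    have hadm' : AdmissibleA (l.map pick) := by
      intro a
      rw [List.map_map]
      calc (l.map fun y => |pick y a|).sum ≤ (l.map fun y => |y a|).sum :=
            List.sum_le_sum (fun y _ => hpick1 y a)
        _ ≤ 1 := hl a
    have hstep : ((l.map fun x => |g x|)).sum ≤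
        ((l.map fun y => f (pick y) + δ)).sum := by
      refine List.sum_le_sum ?_
      intro y _
      rw [abs_of_nonneg (hg0 y)]
      linarith [hpick2 y]
    have hsplit : ((l.map fun y => f (pick y) + δ)).sum =
        ((l.map fun y => f (pick y))).sum + l.length * δ :=
      sum_map_add_const l (fun y => f (pick y)) δ
    have hfsum : ((l.map fun y => f (pick y))).sum ≤ M := by
      calc ((l.map fun y => f (pick y))).sum
          ≤ ((l.map fun y => |f (pick y)|)).sum :=
            List.sum_le_sum (fun y _ => le_abs_self _)
        _ = (((l.map pick).map fun x => |f x|)).sum := by rw [List.map_map]; rfl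
        _ ≤ M := hsum _ hadm'
    have hnδ : (l.length : ℝ) * δ ≤ ε := by
      set n : ℝ := (l.length : ℝ) with hn
      have hn0 : 0 ≤ n := Nat.cast_nonneg _
      have hn1 : (0:ℝ) < n + 1 := by linarith
      rw [hδ, hn]
      rw [div_eq_mul_inv, ← mul_assoc, mul_comm ((l.length:ℝ)) ε, mul_assoc]
      have h2 : ((l.length:ℝ)) * (((l.length:ℝ))+1)⁻¹ ≤ 1 := by
        rw [← div_eq_mul_inv, div_le_one (by positivity)]; linarith
      calc ε * (((l.length:ℝ)) * (((l.length:ℝ))+1)⁻¹) ≤ ε * 1 :=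
            mul_le_mul_of_nonneg_left h2 hε.le
        _ = ε := mul_one ε
    calc ((l.map fun x => |g x|)).sum ≤ ((l.map fun y => f (pick y))).sum + l.length * δ := by
          rw [← hsplit]; exact hstep
      _ ≤ M + ε := add_le_add hfsum hnδ
  have hgle : fblNormA g ≤ fblNormA f := by
    rw [fblNormA]
    refine iSup_le ?_
    rintro ⟨l, hl⟩
    calc ENNReal.ofReal ((l.map fun x => |g x|).sum) ≤ ENNReal.ofReal M :=
          ENNReal.ofReal_le_ofReal (hglesum l hl)
      _ = fblNormA f := ENNReal.ofReal_toReal hfinne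
  have hfle : fblNormA f ≤ fblNormA g := by
    rw [fblNormA, fblNormA]
    refine iSup_mono ?_
    rintro ⟨l, hl⟩
    refine ENNReal.ofReal_le_ofReal (List.sum_le_sum ?_)
    intro y _
    rw [abs_of_nonneg (hpos y), abs_of_nonneg (hg0 y)]
    exact hgf y
  have heq : fblNormA g = fblNormA f := le_antisymm hgle hfle
  have hgfin : fblNormA g < ⊤ := heq ▸ hfin
  have hge : g = f := hmax g hgph hg0 hgfin hgf heq
  intro x y hxy
  calc f x ≤ g y := hmono x y hxy
    _ = f y := by rw [hge]
end
end

section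
/- Let A be a nonempty set and f ∈ H_0[ℓ1(A)]_+ maximal. Then f is superadditive on positive elements: Σ_{k=1}^n f(x_k*) ≤ f(Σ_{k=1}^n x_k*) for every n ∈ ℕ and x_1*,…,x_n* ∈ ℓ∞(A)_+. -/
open scoped ENNReal

noncomputable section

namespace Stmt10Aux

variable {A : Type*}

abbrev EA (A : Type*) := lp (fun _ : A => ℝ) ⊤

lemma smul_apply' (c : ℝ) (x : EA A) (a : A) : (c • x) a = c * x a := by
  rw [lp.coeFn_smul]; rfl

lemma zero_apply' (a : A) : ((0 : EA A) : A → ℝ) a = 0 := by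
  rw [lp.coeFn_zero]; rfl

lemma abs_apply_le_norm (x : EA A) (a : A) : |x a| ≤ ‖x‖ := by
  have := lp.norm_apply_le_norm (E := fun _ : A => ℝ) ENNReal.top_ne_zero x a
  rw [← Real.norm_eq_abs]; exact this

/-- evaluation as an additive hom -/
def evalHom (a : A) : EA A →+ ℝ where
  toFun v := v a
  map_zero' := zero_apply' a
  map_add' u v := by
    show ((u + v : EA A) : A → ℝ) a = _
    rw [lp.coeFn_add]; rfl

/-- The set of sums `Σ f(y_k)` over "sub-decompositions" of `x`. -/
def S (f : EA A → ℝ) (x : EA A) : Set ℝ :=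
  {s | ∃ l : List (EA A), (∀ a, (l.map fun y => |y a|).sum ≤ |x a|) ∧ s = (l.map f).sum}

/-- The enveloping function. -/
def g (f : EA A → ℝ) (x : EA A) : ℝ := sSup (S f x)

lemma zero_mem_S (f : EA A → ℝ) (x : EA A) : (0 : ℝ) ∈ S f x :=
  ⟨[], fun a => by simp, by simp⟩

section facts

variable {f : EA A → ℝ} (hpos : PosHomA f) (hnn : ∀ x, 0 ≤ f x)
  (hfin : fblNormA f < ∞)

include hpos in
lemma f_zero : f 0 = 0 := by
  have := hpos 0 le_rfl 0
  rwa [zero_smul, zero_mul] at this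

include hnn hfin in
lemma sum_f_le_of_adm (l : List (EA A)) (hl : AdmissibleA l) :
    (l.map f).sum ≤ (fblNormA f).toReal := by
  have h0 : (l.map fun x => |f x|) = l.map f :=
    List.map_congr_left fun y _ => abs_of_nonneg (hnn y)
  have h1 : ENNReal.ofReal ((l.map f).sum) ≤ fblNormA f := by
    have h := le_iSup (fun l' : {m : List (EA A) // AdmissibleA m} =>
      ENNReal.ofReal ((l'.1.map (fun x => |f x|)).sum)) ⟨l, hl⟩
    rw [show ((⟨l, hl⟩ : {m : List (EA A) // AdmissibleA m}).1.map (fun x => |f x|)) = l.map f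
      from h0] at h
    exact h
  have hsnn : 0 ≤ (l.map f).sum := List.sum_nonneg fun s hs => by
    obtain ⟨y, _, rfl⟩ := List.mem_map.1 hs; exact hnn y
  calc (l.map f).sum = (ENNReal.ofReal ((l.map f).sum)).toReal :=
        (ENNReal.toReal_ofReal hsnn).symm
    _ ≤ (fblNormA f).toReal := ENNReal.toReal_mono hfin.ne h1

include hpos hnn hfin in
lemma dec_sum_le (x : EA A) (l : List (EA A))
    (hd : ∀ a, (l.map fun y => |y a|).sum ≤ |x a|) :
    (l.map f).sum ≤ (‖x‖ + 1) * (fblNormA f).toReal := by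
  set c : ℝ := ‖x‖ + 1 with hc
  have hcpos : 0 < c := by have := norm_nonneg x; positivity
  have hadm : AdmissibleA (l.map fun y => c⁻¹ • y) := by
    intro a
    have hmm : ((l.map fun y => c⁻¹ • y).map fun y => |y a|)
        = l.map fun y => c⁻¹ * |y a| := by
      rw [List.map_map]
      exact List.map_congr_left fun y _ => by
        show |(c⁻¹ • y) a| = c⁻¹ * |y a|
        rw [smul_apply', abs_mul, abs_of_nonneg (inv_nonneg.2 hcpos.le)]
    rw [hmm, List.sum_map_mul_left]
    have h1 : (l.map fun y => |y a|).sum ≤ c :=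
      (hd a).trans ((abs_apply_le_norm x a).trans (by linarith))
    calc c⁻¹ * (l.map fun y => |y a|).sum ≤ c⁻¹ * c := by
          exact mul_le_mul_of_nonneg_left h1 (inv_nonneg.2 hcpos.le)
      _ = 1 := inv_mul_cancel₀ hcpos.ne'
  have hb := sum_f_le_of_adm hnn hfin _ hadm
  have heq : ((l.map fun y => c⁻¹ • y).map f).sum = c⁻¹ * (l.map f).sum := by
    rw [List.map_map]
    rw [show (f ∘ fun y => c⁻¹ • y) = fun y => c⁻¹ * f y from
      funext fun y => hpos c⁻¹ (inv_nonneg.2 hcpos.le) y]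
    exact List.sum_map_mul_left l f c⁻¹
  rw [heq] at hb
  have := mul_le_mul_of_nonneg_left hb hcpos.le
  rwa [← mul_assoc, mul_inv_cancel₀ hcpos.ne', one_mul] at this

include hpos hnn hfin in
lemma S_bddAbove (x : EA A) : BddAbove (S f x) := by
  refine ⟨(‖x‖ + 1) * (fblNormA f).toReal, ?_⟩
  rintro s ⟨l, hd, rfl⟩
  exact dec_sum_le hpos hnn hfin x l hd

include hpos hnn hfin in
lemma f_le_g (x : EA A) : f x ≤ g f x := by
  refine le_csSup (S_bddAbove hpos hnn hfin x) ⟨[x], fun a => by simp, by simp⟩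

include hpos hnn hfin in
lemma g_nonneg (x : EA A) : 0 ≤ g f x :=
  le_csSup (S_bddAbove hpos hnn hfin x) (zero_mem_S f x)

include hpos in
lemma g_zero : g f 0 = 0 := by
  have hsub : ∀ s ∈ S f (0 : EA A), s = 0 := by
    rintro s ⟨l, hd, rfl⟩
    refine List.sum_eq_zero fun t ht => ?_
    obtain ⟨y, hy, rfl⟩ := List.mem_map.1 ht
    have hy0 : y = 0 := by
      apply lp.ext; funext a
      have h1 : |y a| ≤ (l.map fun z => |z a|).sum :=
        List.single_le_sum (fun t ht => by
          obtain ⟨z, _, rfl⟩ := List.mem_map.1 ht; exact abs_nonneg _) _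
          (List.mem_map.2 ⟨y, hy, rfl⟩)
      have h2 := hd a
      rw [zero_apply'] at h2
      simp only [abs_zero] at h2
      have : |y a| ≤ 0 := h1.trans h2
      have := abs_nonneg (y a)
      show y a = (0 : ℝ)
      have : |y a| = 0 := le_antisymm ‹|y a| ≤ 0› ‹0 ≤ |y a|›
      exact abs_eq_zero.1 this
    rw [hy0]
    exact f_zero hpos
  refine le_antisymm (csSup_le ⟨0, zero_mem_S f 0⟩ fun s hs => le_of_eq (hsub s hs)) ?_
  exact le_csSup ⟨0, fun s hs => le_of_eq (hsub s hs)⟩ (zero_mem_S f 0)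

include hpos hnn hfin in
lemma g_homog_le (c : ℝ) (hc : 0 < c) (x : EA A) : g f (c • x) ≤ c * g f x := by
  refine csSup_le ⟨0, zero_mem_S f _⟩ ?_
  rintro s ⟨l, hd, rfl⟩
  have hdec : ∀ a, ((l.map fun y => c⁻¹ • y).map fun y => |y a|).sum ≤ |x a| := by
    intro a
    have hmm : ((l.map fun y => c⁻¹ • y).map fun y => |y a|)
        = l.map fun y => c⁻¹ * |y a| := by
      rw [List.map_map]
      exact List.map_congr_left fun y _ => by
        show |(c⁻¹ • y) a| = c⁻¹ * |y a|
        rw [smul_apply', abs_mul, abs_of_nonneg (inv_nonneg.2 hc.le)]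
    rw [hmm, List.sum_map_mul_left]
    have h2 := hd a
    rw [show |(c • x) a| = c * |x a| by
      rw [smul_apply', abs_mul, abs_of_nonneg hc.le]] at h2
    calc c⁻¹ * (l.map fun y => |y a|).sum ≤ c⁻¹ * (c * |x a|) :=
          mul_le_mul_of_nonneg_left h2 (inv_nonneg.2 hc.le)
      _ = |x a| := by rw [← mul_assoc, inv_mul_cancel₀ hc.ne', one_mul]
  have hmem : c⁻¹ * (l.map f).sum ∈ S f x := by
    refine ⟨l.map fun y => c⁻¹ • y, hdec, ?_⟩
    rw [List.map_map]
    rw [show (f ∘ fun y => c⁻¹ • y) = fun y => c⁻¹ * f y from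
      funext fun y => hpos c⁻¹ (inv_nonneg.2 hc.le) y]
    exact (List.sum_map_mul_left l f c⁻¹).symm
  have := le_csSup (S_bddAbove hpos hnn hfin x) hmem
  have h3 := mul_le_mul_of_nonneg_left this hc.le
  rwa [← mul_assoc, mul_inv_cancel₀ hc.ne', one_mul] at h3

include hpos hnn hfin in
lemma g_hom : PosHomA (g f) := by
  intro c hc x
  rcases eq_or_lt_of_le hc with h | h
  · rw [← h, zero_smul, zero_mul]
    exact g_zero hpos
  · refine le_antisymm (g_homog_le hpos hnn hfin c h x) ?_
    have h2 := g_homog_le hpos hnn hfin c⁻¹ (inv_pos.2 h) (c • x)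
    rw [smul_smul, inv_mul_cancel₀ h.ne', one_smul] at h2
    have h3 := mul_le_mul_of_nonneg_left h2 h.le
    rwa [← mul_assoc, mul_inv_cancel₀ h.ne', one_mul] at h3

omit hpos hnn hfin in
lemma exists_dec (x : EA A) (ε : ℝ) (hε : 0 < ε) :
    ∃ l : List (EA A), (∀ a, (l.map fun y => |y a|).sum ≤ |x a|) ∧
      g f x ≤ (l.map f).sum + ε := by
  have hlt : g f x - ε < g f x := by linarith
  obtain ⟨s, ⟨l, hd, rfl⟩, hs⟩ := exists_lt_of_lt_csSup ⟨0, zero_mem_S f x⟩ hlt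
  exact ⟨l, hd, by linarith⟩

omit hpos hnn hfin in
lemma key (l : List (EA A)) : ∀ ε : ℝ, 0 < ε → ∃ L : List (EA A),
    (∀ a, (L.map fun y => |y a|).sum ≤ (l.map fun y => |y a|).sum) ∧
    (l.map (g f)).sum ≤ (L.map f).sum + ε := by
  induction l with
  | nil =>
    intro ε hε
    exact ⟨[], fun a => le_rfl, by simp; linarith⟩
  | cons x l ih =>
    intro ε hε
    obtain ⟨L, hL1, hL2⟩ := ih (ε / 2) (by linarith)
    obtain ⟨d, hd1, hd2⟩ := exists_dec (f := f) x (ε / 2) (by linarith)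
    refine ⟨d ++ L, ?_, ?_⟩
    · intro a
      rw [List.map_append, List.sum_append]
      simp only [List.map_cons, List.sum_cons]
      exact add_le_add (hd1 a) (hL1 a)
    · rw [List.map_append, List.sum_append]
      simp only [List.map_cons, List.sum_cons]
      linarith

include hpos hnn hfin in
lemma g_norm_le : fblNormA (g f) ≤ fblNormA f := by
  refine iSup_le ?_
  rintro ⟨l, hl⟩
  have hsum : (l.map fun x => |g f x|).sum = (l.map (g f)).sum :=
    congrArg List.sum
      (List.map_congr_left fun y _ => abs_of_nonneg (g_nonneg hpos hnn hfin y))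
  have hb : (l.map (g f)).sum ≤ (fblNormA f).toReal := by
    by_contra hcon
    push_neg at hcon
    set ε : ℝ := ((l.map (g f)).sum - (fblNormA f).toReal) / 2 with hed
    have hε : 0 < ε := by rw [hed]; linarith
    obtain ⟨L, hL1, hL2⟩ := key (f := f) l ε hε
    have hadm : AdmissibleA L := fun a => (hL1 a).trans (hl a)
    have := sum_f_le_of_adm hnn hfin L hadm
    rw [hed] at hL2
    linarith
  calc ENNReal.ofReal ((l.map fun x => |g f x|).sum)
      ≤ ENNReal.ofReal (fblNormA f).toReal :=
        ENNReal.ofReal_le_ofReal (by rw [hsum]; exact hb)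
    _ = fblNormA f := ENNReal.ofReal_toReal hfin.ne

include hpos hnn hfin in
lemma g_norm_ge : fblNormA f ≤ fblNormA (g f) := by
  refine iSup_mono fun l => ENNReal.ofReal_le_ofReal (List.sum_le_sum fun y _ => ?_)
  rw [abs_of_nonneg (hnn y), abs_of_nonneg (g_nonneg hpos hnn hfin y)]
  exact f_le_g hpos hnn hfin y

end facts

end Stmt10Aux

open Stmt10Aux in
/-- a maximal `f ∈ H_0[ℓ1(A)]_+` is superadditive on nonnegative elements. -/
theorem stmt10 {A : Type*} [Nonempty A] (f : lp (fun _ : A => ℝ) ⊤ → ℝ)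
    (hf : MaximalA f) :
    ∀ (n : ℕ) (x : Fin n → lp (fun _ : A => ℝ) ⊤), (∀ k, ∀ a, 0 ≤ x k a) →
      ∑ k, f (x k) ≤ f (∑ k, x k) := by
  obtain ⟨hpos, hnn, hfin, hmax⟩ := hf
  have hnormeq : fblNormA (g f) = fblNormA f :=
    le_antisymm (g_norm_le hpos hnn hfin) (g_norm_ge hpos hnn hfin)
  have hgf : g f = f :=
    hmax (g f) (g_hom hpos hnn hfin) (g_nonneg hpos hnn hfin)
      (hnormeq ▸ hfin) (f_le_g hpos hnn hfin) hnormeq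
  intro n x hx
  have hmem : (∑ k, f (x k)) ∈ S f (∑ k, x k) := by
    refine ⟨List.ofFn x, ?_, ?_⟩
    · intro a
      have hc : ((List.ofFn x).map fun y => |y a|) = List.ofFn fun k => |x k a| := by
        rw [List.map_ofFn]; rfl
      rw [hc, List.sum_ofFn]
      have hsa : (∑ k, x k) a = ∑ k, x k a := map_sum (evalHom a) x Finset.univ
      have h1 : ∑ k, |x k a| = ∑ k, x k a :=
        Finset.sum_congr rfl fun k _ => abs_of_nonneg (hx k a)
      rw [h1, ← hsa]
      exact le_abs_self _
    · rw [show (List.ofFn x).map f = List.ofFn (f ∘ x) from List.map_ofFn,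
        List.sum_ofFn]
      rfl
  have hle := le_csSup (S_bddAbove hpos hnn hfin (∑ k, x k)) hmem
  exact hle.trans_eq (congrFun hgf _)
end
end

section
/- Let A be a nonempty set and f ∈ H_0[ℓ1(A)]_+ maximal. Then ||f||_{FBL[ℓ1(A)]} = ||f||_∞, where ||f||_∞ = sup{ |f(x*)| : x* ∈ B_{ℓ∞(A)} }. -/
open scoped ENNReal

noncomputable section

namespace Stmt11Aux

variable {A : Type*}

/-- `l` decomposes `x` pointwise. -/
def Dec (x : lp (fun _ : A => ℝ) ⊤) (l : List (lp (fun _ : A => ℝ) ⊤)) : Prop :=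
  ∀ a : A, (l.map fun y => |y a|).sum ≤ |x a|

def S11 (f : lp (fun _ : A => ℝ) ⊤ → ℝ) (x : lp (fun _ : A => ℝ) ⊤) : Set ℝ :=
  {s | ∃ l, Dec x l ∧ (l.map f).sum = s}

def gg (f : lp (fun _ : A => ℝ) ⊤ → ℝ) (x : lp (fun _ : A => ℝ) ⊤) : ℝ :=
  sSup (S11 f x)

variable {f : lp (fun _ : A => ℝ) ⊤ → ℝ}

lemma f_zero (hph : PosHomA f) : f 0 = 0 := by
  have := hph 0 le_rfl 0
  simpa using this

lemma abs_apply_le_norm (x : lp (fun _ : A => ℝ) ⊤) (a : A) : |x a| ≤ ‖x‖ := by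
  have h := lp.norm_apply_le_norm (show (⊤ : ℝ≥0∞) ≠ 0 by simp) x a
  rwa [Real.norm_eq_abs] at h

lemma map_abs_sum_eq (hpos : ∀ x, 0 ≤ f x) (l : List (lp (fun _ : A => ℝ) ⊤)) :
    (l.map fun x => |f x|).sum = (l.map f).sum := by
  congr 1
  exact List.map_congr_left fun y _ => abs_of_nonneg (hpos y)

lemma adm_sum_le (hfin : fblNormA f < ∞) (l : List (lp (fun _ : A => ℝ) ⊤))
    (hl : AdmissibleA l) :
    (l.map fun y => |f y|).sum ≤ (fblNormA f).toReal := by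
  have h1 : ENNReal.ofReal ((l.map fun y => |f y|).sum) ≤ fblNormA f :=
    le_iSup (fun l : {l : List (lp (fun _ : A => ℝ) ⊤) // AdmissibleA l} =>
      ENNReal.ofReal ((l.1.map (fun x => |f x|)).sum)) ⟨l, hl⟩
  exact (ENNReal.ofReal_le_iff_le_toReal hfin.ne).mp h1

lemma smul_dec {x : lp (fun _ : A => ℝ) ⊤} {l : List (lp (fun _ : A => ℝ) ⊤)}
    (hl : Dec x l) {c : ℝ} (hc : 0 ≤ c) :
    Dec (c • x) (l.map fun y => c • y) := by
  intro a
  rw [List.map_map]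
  have h1 : ((fun y : lp (fun _ : A => ℝ) ⊤ => |y a|) ∘ fun y => c • y) =
      fun y => c * |y a| := by
    funext y
    simp [Function.comp, lp.coeFn_smul, abs_mul, abs_of_nonneg hc]
  rw [h1, List.sum_map_mul_left]
  have h2 : |(c • x) a| = c * |x a| := by
    simp [lp.coeFn_smul, abs_mul, abs_of_nonneg hc]
  rw [h2]
  exact mul_le_mul_of_nonneg_left (hl a) hc

lemma smul_sum_f (hph : PosHomA f) {c : ℝ} (hc : 0 ≤ c)
    (l : List (lp (fun _ : A => ℝ) ⊤)) :
    ((l.map fun y => c • y).map f).sum = c * (l.map f).sum := by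
  rw [List.map_map]
  have h1 : (f ∘ fun y : lp (fun _ : A => ℝ) ⊤ => c • y) = fun y => c * f y := by
    funext y; exact hph c hc y
  rw [h1, List.sum_map_mul_left]

lemma dec_bound (hph : PosHomA f) (hpos : ∀ x, 0 ≤ f x) (hfin : fblNormA f < ∞)
    (x : lp (fun _ : A => ℝ) ⊤) {l : List (lp (fun _ : A => ℝ) ⊤)} (hl : Dec x l) :
    (l.map f).sum ≤ (fblNormA f).toReal * ‖x‖ := by
  rcases eq_or_ne ‖x‖ 0 with hx | hx
  · have hx0 : x = 0 := norm_eq_zero.mp hx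
    subst hx0
    have hall : ∀ y ∈ l, y = (0 : lp (fun _ : A => ℝ) ⊤) := by
      intro y hy
      apply lp.ext
      funext a
      have h0 := hl a
      have hnn : ∀ s ∈ l.map fun y : lp (fun _ : A => ℝ) ⊤ => |y a|, 0 ≤ s := by
        intro s hs
        rcases List.mem_map.mp hs with ⟨z, _, rfl⟩
        exact abs_nonneg _
      have h1 : |y a| ≤ (l.map fun y => |y a|).sum :=
        List.single_le_sum hnn _ (List.mem_map_of_mem hy)
      have h2 : |(0 : lp (fun _ : A => ℝ) ⊤) a| = 0 := by
        rw [lp.coeFn_zero]; simp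
      have h3 : |y a| ≤ 0 := by rw [h2] at h0; linarith
      have h4 : y a = 0 := abs_eq_zero.mp (le_antisymm h3 (abs_nonneg _))
      rw [h4, lp.coeFn_zero]; simp
    have hsum0 : (l.map f).sum = 0 := by
      apply List.sum_eq_zero
      intro s hs
      rcases List.mem_map.mp hs with ⟨y, hy, rfl⟩
      rw [hall y hy, f_zero hph]
    rw [hsum0, hx, mul_zero]
  · have hc : 0 < ‖x‖ := lt_of_le_of_ne (norm_nonneg x) (Ne.symm hx)
    set c := ‖x‖ with hcdef
    have hadm : AdmissibleA (l.map fun y => c⁻¹ • y) := by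
      intro a
      have hd := smul_dec hl (inv_nonneg.mpr hc.le) a
      refine le_trans hd ?_
      have h2 : |(c⁻¹ • x) a| = c⁻¹ * |x a| := by
        simp [lp.coeFn_smul, abs_mul, abs_of_nonneg (inv_nonneg.mpr hc.le)]
      rw [h2]
      calc c⁻¹ * |x a| ≤ c⁻¹ * c :=
            mul_le_mul_of_nonneg_left (abs_apply_le_norm x a) (inv_nonneg.mpr hc.le)
        _ = 1 := inv_mul_cancel₀ hx
    have h3 := adm_sum_le hfin _ hadm
    rw [map_abs_sum_eq hpos, smul_sum_f hph (inv_nonneg.mpr hc.le)] at h3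
    have h4 : (l.map f).sum ≤ c * (fblNormA f).toReal := by
      have h5 := mul_le_mul_of_nonneg_left h3 hc.le
      rwa [← mul_assoc, mul_inv_cancel₀ hx, one_mul] at h5
    calc (l.map f).sum ≤ c * (fblNormA f).toReal := h4
      _ = (fblNormA f).toReal * ‖x‖ := by rw [mul_comm]

lemma zero_mem (x : lp (fun _ : A => ℝ) ⊤) : (0 : ℝ) ∈ S11 f x :=
  ⟨[], by intro a; simpa using abs_nonneg (x a), by simp⟩

lemma S11_nonempty (x : lp (fun _ : A => ℝ) ⊤) : (S11 f x).Nonempty :=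
  ⟨0, zero_mem x⟩

lemma S11_bdd (hph : PosHomA f) (hpos : ∀ x, 0 ≤ f x) (hfin : fblNormA f < ∞)
    (x : lp (fun _ : A => ℝ) ⊤) : BddAbove (S11 f x) := by
  refine ⟨(fblNormA f).toReal * ‖x‖, ?_⟩
  rintro s ⟨l, hl, rfl⟩
  exact dec_bound hph hpos hfin x hl

lemma gg_nonneg (hph : PosHomA f) (hpos : ∀ x, 0 ≤ f x) (hfin : fblNormA f < ∞)
    (x : lp (fun _ : A => ℝ) ⊤) : 0 ≤ gg f x :=
  le_csSup (S11_bdd hph hpos hfin x) (zero_mem x)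

lemma le_gg (hph : PosHomA f) (hpos : ∀ x, 0 ≤ f x) (hfin : fblNormA f < ∞)
    (x : lp (fun _ : A => ℝ) ⊤) : f x ≤ gg f x := by
  refine le_csSup (S11_bdd hph hpos hfin x) ⟨[x], ?_, by simp⟩
  intro a; simp

lemma mem_gg_le (hph : PosHomA f) (hpos : ∀ x, 0 ≤ f x) (hfin : fblNormA f < ∞)
    {x : lp (fun _ : A => ℝ) ⊤} {l : List (lp (fun _ : A => ℝ) ⊤)} (hl : Dec x l) :
    (l.map f).sum ≤ gg f x :=
  le_csSup (S11_bdd hph hpos hfin x) ⟨l, hl, rfl⟩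

lemma gg_zero (hph : PosHomA f) (hpos : ∀ x, 0 ≤ f x) (hfin : fblNormA f < ∞) :
    gg f (0 : lp (fun _ : A => ℝ) ⊤) = 0 := by
  refine le_antisymm ?_ (gg_nonneg hph hpos hfin 0)
  refine csSup_le (S11_nonempty 0) ?_
  rintro s ⟨l, hl, rfl⟩
  have h := dec_bound hph hpos hfin 0 hl
  rwa [norm_zero, mul_zero] at h

lemma gg_posHom (hph : PosHomA f) (hpos : ∀ x, 0 ≤ f x) (hfin : fblNormA f < ∞) :
    PosHomA (gg f) := by
  intro c hc x
  rcases eq_or_lt_of_le hc with hc0 | hc0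
  · rw [← hc0, zero_smul, zero_mul, gg_zero hph hpos hfin]
  · apply le_antisymm
    · refine csSup_le (S11_nonempty _) ?_
      rintro s ⟨l, hl, rfl⟩
      have hd : Dec x (l.map fun y => c⁻¹ • y) := by
        have := smul_dec hl (inv_nonneg.mpr hc0.le)
        have he : c⁻¹ • c • x = x := by
          rw [smul_smul, inv_mul_cancel₀ hc0.ne', one_smul]
        rwa [he] at this
      have hs : ((l.map fun y => c⁻¹ • y).map f).sum ≤ gg f x :=
        mem_gg_le hph hpos hfin hd
      rw [smul_sum_f hph (inv_nonneg.mpr hc0.le)] at hs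
      have h6 := mul_le_mul_of_nonneg_left hs hc0.le
      rwa [← mul_assoc, mul_inv_cancel₀ hc0.ne', one_mul] at h6
    · have h1 : gg f x ≤ c⁻¹ * gg f (c • x) := by
        refine csSup_le (S11_nonempty _) ?_
        rintro s ⟨l, hl, rfl⟩
        have hd : Dec (c • x) (l.map fun y => c • y) := smul_dec hl hc0.le
        have hs : ((l.map fun y => c • y).map f).sum ≤ gg f (c • x) :=
          mem_gg_le hph hpos hfin hd
        rw [smul_sum_f hph hc0.le] at hs
        have hci : 0 ≤ c⁻¹ := (inv_pos.mpr hc0).le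
        have h6 := mul_le_mul_of_nonneg_left hs hci
        rwa [← mul_assoc, inv_mul_cancel₀ hc0.ne', one_mul] at h6
      have h7 := mul_le_mul_of_nonneg_left h1 hc0.le
      rwa [← mul_assoc, mul_inv_cancel₀ hc0.ne', one_mul] at h7

lemma approx (hph : PosHomA f) (hpos : ∀ x, 0 ≤ f x) (hfin : fblNormA f < ∞)
    (L : List (lp (fun _ : A => ℝ) ⊤)) :
    ∀ ε : ℝ, 0 < ε → ∃ l : List (lp (fun _ : A => ℝ) ⊤),
      (∀ a : A, (l.map fun y => |y a|).sum ≤ (L.map fun x => |x a|).sum) ∧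
      (L.map (gg f)).sum ≤ (l.map f).sum + ε := by
  induction L with
  | nil =>
    intro ε hε
    exact ⟨[], by intro a; simp, by simp [hε.le]⟩
  | cons x L ih =>
    intro ε hε
    obtain ⟨l', hl'1, hl'2⟩ := ih (ε / 2) (by linarith)
    have hlt : gg f x - ε / 2 < sSup (S11 f x) := sub_lt_self _ (by linarith)
    obtain ⟨s, hs, hslt⟩ := exists_lt_of_lt_csSup (S11_nonempty x) hlt
    obtain ⟨lx, hlx, rfl⟩ := hs
    refine ⟨lx ++ l', ?_, ?_⟩
    · intro a
      rw [List.map_append, List.sum_append, List.map_cons, List.sum_cons]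
      exact add_le_add (hlx a) (hl'1 a)
    · rw [List.map_cons, List.sum_cons, List.map_append, List.sum_append]
      linarith

lemma gg_adm_bound (hph : PosHomA f) (hpos : ∀ x, 0 ≤ f x) (hfin : fblNormA f < ∞)
    {L : List (lp (fun _ : A => ℝ) ⊤)} (hL : AdmissibleA L) :
    (L.map (gg f)).sum ≤ (fblNormA f).toReal := by
  refine le_of_forall_pos_le_add ?_
  intro ε hε
  obtain ⟨l, hl1, hl2⟩ := approx hph hpos hfin L ε hε
  have hadm : AdmissibleA l := fun a => le_trans (hl1 a) (hL a)
  have h3 := adm_sum_le hfin l hadm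
  rw [map_abs_sum_eq hpos] at h3
  linarith

lemma gg_fblNorm (hph : PosHomA f) (hpos : ∀ x, 0 ≤ f x) (hfin : fblNormA f < ∞) :
    fblNormA (gg f) = fblNormA f := by
  apply le_antisymm
  · refine iSup_le ?_
    rintro ⟨L, hL⟩
    have h1 : (L.map fun x => |gg f x|).sum = (L.map (gg f)).sum :=
      map_abs_sum_eq (gg_nonneg hph hpos hfin) L
    rw [h1]
    exact ENNReal.ofReal_le_of_le_toReal (gg_adm_bound hph hpos hfin hL)
  · refine iSup_le ?_
    rintro ⟨L, hL⟩
    refine le_trans ?_ (le_iSup (fun l : {l : List (lp (fun _ : A => ℝ) ⊤) // AdmissibleA l} =>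
      ENNReal.ofReal ((l.1.map (fun x => |gg f x|)).sum)) ⟨L, hL⟩)
    apply ENNReal.ofReal_le_ofReal
    apply List.sum_le_sum
    intro y _
    rw [abs_of_nonneg (hpos y), abs_of_nonneg (gg_nonneg hph hpos hfin y)]
    exact le_gg hph hpos hfin y

lemma gg_eq_f (hf : MaximalA f) : gg f = f := by
  obtain ⟨hph, hpos, hfin, hmax⟩ := hf
  refine hmax (gg f) (gg_posHom hph hpos hfin) (gg_nonneg hph hpos hfin) ?_
    (le_gg hph hpos hfin) (gg_fblNorm hph hpos hfin)
  rw [gg_fblNorm hph hpos hfin]; exact hfin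

/-- The constant-one element of `ℓ∞(A)`. -/
def oneX (A : Type*) : lp (fun _ : A => ℝ) ⊤ :=
  ⟨fun _ => (1 : ℝ), memℓp_infty ⟨1, by rintro - ⟨a, rfl⟩; simp⟩⟩

lemma oneX_apply (a : A) : (oneX A) a = 1 := rfl

lemma oneX_norm [Nonempty A] : ‖oneX A‖ ≤ 1 := by
  refine lp.norm_le_of_forall_le (by norm_num) ?_
  intro a
  simp [oneX_apply, Real.norm_eq_abs]

end Stmt11Aux

open Stmt11Aux in
/-- a maximal `f ∈ H_0[ℓ1(A)]_+` satisfies `‖f‖_{FBL[ℓ1(A)]} = ‖f‖_∞`. -/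
theorem stmt11 {A : Type*} [Nonempty A] (f : lp (fun _ : A => ℝ) ⊤ → ℝ)
    (hf : MaximalA f) :
    fblNormA f =
      ⨆ x : {x : lp (fun _ : A => ℝ) ⊤ // ‖x‖ ≤ 1}, ENNReal.ofReal |f x.1| := by
  obtain ⟨hph, hpos, hfin, hmax⟩ := hf
  apply le_antisymm
  · refine iSup_le ?_
    rintro ⟨L, hL⟩
    have hdec : Dec (oneX A) L := by
      intro a
      rw [oneX_apply]
      simpa using hL a
    have h1 : (L.map f).sum ≤ gg f (oneX A) := mem_gg_le hph hpos hfin hdec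
    rw [gg_eq_f ⟨hph, hpos, hfin, hmax⟩] at h1
    have h2 : (L.map fun x => |f x|).sum ≤ |f (oneX A)| := by
      rw [map_abs_sum_eq hpos, abs_of_nonneg (hpos _)]
      exact h1
    refine le_trans (ENNReal.ofReal_le_ofReal h2) ?_
    exact le_iSup (fun x : {x : lp (fun _ : A => ℝ) ⊤ // ‖x‖ ≤ 1} =>
      ENNReal.ofReal |f x.1|) ⟨oneX A, oneX_norm⟩
  · refine iSup_le ?_
    rintro ⟨x, hx⟩
    have hadm : AdmissibleA [x] := by
      intro a
      simpa using le_trans (abs_apply_le_norm x a) hx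
    refine le_trans ?_ (le_iSup (fun l : {l : List (lp (fun _ : A => ℝ) ⊤) // AdmissibleA l} =>
      ENNReal.ofReal ((l.1.map (fun y => |f y|)).sum)) ⟨[x], hadm⟩)
    simp
end
end

section
/- Let A be a nonempty set and φ : ℓ∞(A) → ℝ a continuous linear functional. Define g_φ(x*) = |φ(|x*|)| for x* ∈ ℓ∞(A). Then g_φ is nonnegative and positively homogeneous, and ||g_φ||_{FBL[ℓ1(A)]} = sup{ |φ(x*)| : x* ∈ B_{ℓ∞(A)} } = ||φ||. -/
open scoped ENNReal

noncomputable section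

/-- pointwise absolute value on `ℓ∞(A)`. -/
def lpAbs {A : Type*} (x : lp (fun _ : A => ℝ) ⊤) : lp (fun _ : A => ℝ) ⊤ :=
  ⟨fun a => |x a|, by
    have h := lp.memℓp x
    have h2 : Memℓp (fun a => |(x : _ → ℝ) a|) ⊤ := by
      rw [memℓp_infty_iff] at h ⊢
      simpa [Real.norm_eq_abs, abs_abs] using h
    exact h2⟩

lemma lpAbs_apply {A : Type*} (x : lp (fun _ : A => ℝ) ⊤) (a : A) :
    lpAbs x a = |x a| := rfl

lemma sign_mul_self_eq_abs (r : ℝ) : Real.sign r * r = |r| := by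
  rcases lt_trichotomy r 0 with h | h | h
  · rw [Real.sign_of_neg h, abs_of_neg h]; ring
  · simp [h]
  · rw [Real.sign_of_pos h, abs_of_pos h]; ring

lemma coe_list_sum {A : Type*} (l : List (lp (fun _ : A => ℝ) ⊤)) (a : A) :
    (l.sum : ∀ _ : A, ℝ) a = (l.map (fun x => x a)).sum := by
  induction l with
  | nil => rw [List.sum_nil, List.map_nil, List.sum_nil, lp.coeFn_zero]; rfl
  | cons x t ih =>
    rw [List.sum_cons, List.map_cons, List.sum_cons, lp.coeFn_add, Pi.add_apply, ih]

lemma list_abs_sum_le (l : List ℝ) : |l.sum| ≤ (l.map (fun r => |r|)).sum := by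
  induction l with
  | nil => simp
  | cons x t ih =>
    simp only [List.sum_cons, List.map_cons]
    exact (abs_add_le _ _).trans (by gcongr)

set_option maxHeartbeats 1000000 in
set_option synthInstance.maxHeartbeats 400000 in
/-- for a bounded linear functional `φ` on `ℓ∞(A)`, the function
`g_φ(x*) = |φ(|x*|)|` is nonnegative, positively homogeneous, and `‖g_φ‖_{FBL[ℓ1(A)]} = ‖φ‖`. -/
theorem stmt12 {A : Type*} [Nonempty A] (φ : lp (fun _ : A => ℝ) ⊤ →L[ℝ] ℝ) :
    (∀ x, 0 ≤ |φ (lpAbs x)|) ∧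
    PosHomA (fun x : lp (fun _ : A => ℝ) ⊤ => |φ (lpAbs x)|) ∧
    fblNormA (fun x : lp (fun _ : A => ℝ) ⊤ => |φ (lpAbs x)|) = ENNReal.ofReal ‖φ‖ := by
  refine ⟨fun x => abs_nonneg _, ?_, ?_⟩
  · intro c hc x
    show |φ (lpAbs (c • x))| = c * |φ (lpAbs x)|
    have habs : lpAbs (c • x) = c • lpAbs x := by
      apply lp.ext
      funext a
      have h1 : lpAbs (c • x) a = |(c • x) a| := rfl
      have h2 : (c • lpAbs x) a = c * |x a| := by
        rw [lp.coeFn_smul]; simp [lpAbs_apply]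
      rw [h1, h2, lp.coeFn_smul]
      simp [abs_mul, abs_of_nonneg hc]
    rw [habs, map_smul, smul_eq_mul, abs_mul, abs_of_nonneg hc]
  · -- norm equality
    have hub : fblNormA (fun x : lp (fun _ : A => ℝ) ⊤ => |φ (lpAbs x)|)
        ≤ ENNReal.ofReal ‖φ‖ := by
      apply iSup_le
      rintro ⟨l, hl⟩
      apply ENNReal.ofReal_le_ofReal
      simp only [abs_abs]
      set s : lp (fun _ : A => ℝ) ⊤ :=
        (l.map (fun x => Real.sign (φ (lpAbs x)) • lpAbs x)).sum with hs
      have hφs : φ s = (l.map (fun x => |φ (lpAbs x)|)).sum := by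
        rw [hs, map_list_sum, List.map_map]
        refine congrArg List.sum (List.map_congr_left fun x _ => ?_)
        simp only [Function.comp_apply, map_smul, smul_eq_mul]
        exact sign_mul_self_eq_abs _
      have hnorm : ‖s‖ ≤ 1 := by
        apply lp.norm_le_of_forall_le zero_le_one
        intro a
        rw [Real.norm_eq_abs]
        have h1 : s a = (l.map (fun x => Real.sign (φ (lpAbs x)) * |x a|)).sum := by
          rw [hs, coe_list_sum, List.map_map]
          refine congrArg List.sum (List.map_congr_left fun x _ => ?_)
          simp only [Function.comp_apply]
          rw [lp.coeFn_smul]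
          simp [lpAbs_apply]
        rw [h1]
        refine (list_abs_sum_le _).trans ?_
        refine le_trans ?_ (hl a)
        rw [List.map_map]
        apply List.sum_le_sum
        intro x _
        simp only [Function.comp_apply]
        rw [abs_mul]
        calc |Real.sign (φ (lpAbs x))| * |(|x a|)| ≤ 1 * |(|x a|)| := by
              gcongr
              rcases lt_trichotomy (φ (lpAbs x)) 0 with h | h | h
              · rw [Real.sign_of_neg h, abs_neg, abs_one]
              · rw [h, Real.sign_zero, abs_zero]; exact zero_le_one
              · rw [Real.sign_of_pos h, abs_one]
          _ = |x a| := by simp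
      calc (l.map (fun x => |φ (lpAbs x)|)).sum = φ s := hφs.symm
        _ ≤ |φ s| := le_abs_self _
        _ ≤ ‖φ‖ * ‖s‖ := by
            rw [← Real.norm_eq_abs]; exact φ.le_opNorm s
        _ ≤ ‖φ‖ * 1 := by gcongr
        _ = ‖φ‖ := mul_one _
    refine le_antisymm hub ?_
    set S := fblNormA (fun x : lp (fun _ : A => ℝ) ⊤ => |φ (lpAbs x)|) with hS
    have hSne : S ≠ ∞ := (hub.trans_lt ENNReal.ofReal_lt_top).ne
    -- claim: for unit vectors, |φ x| ≤ S.toReal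
    have key : ∀ x : lp (fun _ : A => ℝ) ⊤, ‖x‖ ≤ 1 → |φ x| ≤ S.toReal := by
      intro x hx
      have hmem : ∀ f : A → ℝ, (∀ a, |f a| ≤ |x a|) → Memℓp f ⊤ := by
        intro f hf
        rw [memℓp_infty_iff]
        refine ⟨‖x‖, ?_⟩
        rintro _ ⟨a, rfl⟩
        show ‖f a‖ ≤ ‖x‖
        rw [Real.norm_eq_abs]
        exact (hf a).trans (by
          have := lp.norm_apply_le_norm ENNReal.top_ne_zero x a
          rwa [Real.norm_eq_abs] at this)
      set xp : lp (fun _ : A => ℝ) ⊤ := ⟨fun a => max (x a) 0,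
        hmem _ (fun a => by rw [abs_of_nonneg (le_max_right _ _)]
                            exact le_trans (max_le (le_abs_self _) (abs_nonneg _)) le_rfl)⟩ with hxp
      set xn : lp (fun _ : A => ℝ) ⊤ := ⟨fun a => max (-(x a)) 0,
        hmem _ (fun a => by rw [abs_of_nonneg (le_max_right _ _)]
                            exact max_le (neg_le_abs _) (abs_nonneg _))⟩ with hxn
      have hxpa : ∀ a, xp a = max (x a) 0 := fun a => rfl
      have hxna : ∀ a, xn a = max (-(x a)) 0 := fun a => rfl
      have habs_p : lpAbs xp = xp := by
        apply lp.ext; funext a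
        rw [lpAbs_apply, hxpa, abs_of_nonneg (le_max_right _ _)]
      have habs_n : lpAbs xn = xn := by
        apply lp.ext; funext a
        rw [lpAbs_apply, hxna, abs_of_nonneg (le_max_right _ _)]
      have hsub : xp - xn = x := by
        apply lp.ext; funext a
        rw [lp.coeFn_sub, Pi.sub_apply, hxpa, hxna]
        exact max_zero_sub_max_neg_zero_eq_self _
      have hadm : AdmissibleA [xp, xn] := by
        intro a
        simp only [List.map_cons, List.map_nil, List.sum_cons, List.sum_nil, add_zero]
        rw [abs_of_nonneg (le_max_right (x a) 0), abs_of_nonneg (le_max_right (-(x a)) 0)]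
        have h1 : max (x a) 0 + max (-(x a)) 0 = |x a| := by
          rcases le_total (x a) 0 with h | h
          · rw [max_eq_right h, max_eq_left (by linarith), abs_of_nonpos h]; ring
          · rw [max_eq_left h, max_eq_right (by linarith), abs_of_nonneg h]; ring
        rw [h1]
        have := lp.norm_apply_le_norm ENNReal.top_ne_zero x a
        rw [Real.norm_eq_abs] at this
        exact this.trans hx
      have hle : ENNReal.ofReal |φ x| ≤ S := by
        refine le_trans ?_ (le_iSup _ (⟨[xp, xn], hadm⟩ :
          {l : List (lp (fun _ : A => ℝ) ⊤) // AdmissibleA l}))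
        apply ENNReal.ofReal_le_ofReal
        simp only [List.map_cons, List.map_nil, List.sum_cons, List.sum_nil, add_zero, abs_abs]
        rw [habs_p, habs_n]
        calc |φ x| = |φ xp - φ xn| := by rw [← map_sub, hsub]
          _ ≤ |φ xp| + |φ xn| := abs_sub _ _
      rwa [ENNReal.ofReal_le_iff_le_toReal hSne] at hle
    have hnorm : ‖φ‖ ≤ S.toReal := by
      apply φ.opNorm_le_bound ENNReal.toReal_nonneg
      intro x
      rcases eq_or_ne x 0 with rfl | hx
      · simp
      · have hxn : 0 < ‖x‖ := norm_pos_iff.mpr hx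
        set u := ‖x‖⁻¹ • x with hu
        have hun : ‖u‖ ≤ 1 := by
          rw [hu, norm_smul, norm_inv, norm_norm, inv_mul_cancel₀ hxn.ne']
        have := key u hun
        rw [hu, map_smul, smul_eq_mul, abs_mul, abs_inv, abs_of_pos hxn] at this
        rw [Real.norm_eq_abs]
        calc |φ x| = ‖x‖ * (‖x‖⁻¹ * |φ x|) := by field_simp
          _ ≤ ‖x‖ * S.toReal := by gcongr
          _ = S.toReal * ‖x‖ := mul_comm _ _
    calc ENNReal.ofReal ‖φ‖ ≤ ENNReal.ofReal S.toReal := ENNReal.ofReal_le_ofReal hnorm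
      _ = S := ENNReal.ofReal_toReal hSne
end
end
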